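/- arXiv:1509.05205 — 2 statements merged into one kernel-verified Lean document; each statement's English description precedes it below -/
import Mathlib

section
/- Let G be a group, H a normal subgroup of index 2, X a generating set of G, and u an element of G with u ∉ H. Then H is generated by the set {x·u : x ∈ X, x·u ∈ H} ∪ {u⁻¹·x : x ∈ X, u⁻¹·x ∈ H} ∪ {x : x ∈ X, x ∈ H} ∪ {u⁻¹·x·u : x ∈ X, x ∈ H}. -/
/-- Reidemeister–Schreier for an index-2 subgroup with Schreier transversal `{1, u}`:
if `G` is generated by `X`, `H` is a normal subgroup of index 2 and `u ∉ H`, then `H`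
is generated by the elements `x·u`, `u⁻¹·x`, `x` and `u⁻¹·x·u` (for `x ∈ X`) that lie
in `H`. -/
theorem reidemeister_schreier_index_two (G : Type*) [Group G] (H : Subgroup G)
    [H.Normal] (hH : H.index = 2) (X : Set G) (hX : Subgroup.closure X = ⊤)
    (u : G) (hu : u ∉ H) :
    Subgroup.closure
      ({g | ∃ x ∈ X, g = x * u ∧ g ∈ H} ∪
       {g | ∃ x ∈ X, g = u⁻¹ * x ∧ g ∈ H} ∪
       {g | g ∈ X ∧ g ∈ H} ∪
       {g | ∃ x ∈ X, x ∈ H ∧ g = u⁻¹ * x * u}) = H := by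
  set S := ({g | ∃ x ∈ X, g = x * u ∧ g ∈ H} ∪
       {g | ∃ x ∈ X, g = u⁻¹ * x ∧ g ∈ H} ∪
       {g | g ∈ X ∧ g ∈ H} ∪
       {g | ∃ x ∈ X, x ∈ H ∧ g = u⁻¹ * x * u}) with hS
  set K := Subgroup.closure S with hK
  apply le_antisymm
  · rw [hK, Subgroup.closure_le]
    rintro g (((⟨x, hx, rfl, hg⟩ | ⟨x, hx, rfl, hg⟩) | ⟨hg, hgH⟩) | ⟨x, hx, hxH, rfl⟩)
    · exact hg
    · exact hg
    · exact hgH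
    · have h2 := Subgroup.Normal.conj_mem ‹H.Normal› x hxH u⁻¹
      simpa using h2
  · intro h hh
    -- Key invariant
    have key : ∀ g : G, (g ∈ H → g ∈ K ∧ u⁻¹ * g * u ∈ K) ∧
        (g ∉ H → g * u ∈ K ∧ u⁻¹ * g ∈ K) := by
      intro g
      have hg : g ∈ Subgroup.closure X := by rw [hX]; trivial
      induction hg using Subgroup.closure_induction with
      | mem x hx =>
        by_cases hxH : x ∈ H
        · refine ⟨fun _ => ⟨?_, ?_⟩, fun h' => absurd hxH h'⟩
          · exact Subgroup.subset_closure (Or.inl (Or.inr ⟨hx, hxH⟩))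
          · exact Subgroup.subset_closure (Or.inr ⟨x, hx, hxH, rfl⟩)
        · refine ⟨fun h' => absurd h' hxH, fun _ => ⟨?_, ?_⟩⟩
          · have : x * u ∈ H := by
              rw [Subgroup.mul_mem_iff_of_index_two hH]; tauto
            exact Subgroup.subset_closure (Or.inl (Or.inl (Or.inl ⟨x, hx, rfl, this⟩)))
          · have : u⁻¹ * x ∈ H := by
              rw [Subgroup.mul_mem_iff_of_index_two hH, inv_mem_iff]; tauto
            exact Subgroup.subset_closure (Or.inl (Or.inl (Or.inr ⟨x, hx, rfl, this⟩)))
      | one =>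
        refine ⟨fun _ => ⟨one_mem K, ?_⟩, fun h' => absurd (one_mem H) h'⟩
        simpa using one_mem K
      | mul a b _ _ ha hb =>
        by_cases haH : a ∈ H <;> by_cases hbH : b ∈ H
        · have habH : a * b ∈ H := mul_mem haH hbH
          refine ⟨fun _ => ⟨mul_mem (ha.1 haH).1 (hb.1 hbH).1, ?_⟩,
            fun h' => absurd habH h'⟩
          have := mul_mem (ha.1 haH).2 (hb.1 hbH).2
          have e : (u⁻¹ * a * u) * (u⁻¹ * b * u) = u⁻¹ * (a * b) * u := by group
          rwa [e] at this
        · have habH : a * b ∉ H := by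
            rw [Subgroup.mul_mem_iff_of_index_two hH]; tauto
          refine ⟨fun h' => absurd h' habH, fun _ => ⟨?_, ?_⟩⟩
          · have := mul_mem (ha.1 haH).1 (hb.2 hbH).1
            rwa [show a * (b * u) = a * b * u by group] at this
          · have := mul_mem (ha.1 haH).2 (hb.2 hbH).2
            rwa [show (u⁻¹ * a * u) * (u⁻¹ * b) = u⁻¹ * (a * b) by group] at this
        · have habH : a * b ∉ H := by
            rw [Subgroup.mul_mem_iff_of_index_two hH]; tauto
          refine ⟨fun h' => absurd h' habH, fun _ => ⟨?_, ?_⟩⟩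
          · have := mul_mem (ha.2 haH).1 (hb.1 hbH).2
            rwa [show (a * u) * (u⁻¹ * b * u) = a * b * u by group] at this
          · have := mul_mem (ha.2 haH).2 (hb.1 hbH).1
            rwa [show (u⁻¹ * a) * b = u⁻¹ * (a * b) by group] at this
        · have habH : a * b ∈ H := by
            rw [Subgroup.mul_mem_iff_of_index_two hH]; tauto
          refine ⟨fun _ => ⟨?_, ?_⟩, fun h' => absurd habH h'⟩
          · have := mul_mem (ha.2 haH).1 (hb.2 hbH).2
            rwa [show (a * u) * (u⁻¹ * b) = a * b by group] at this
          · have := mul_mem (ha.2 haH).2 (hb.2 hbH).1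
            rwa [show (u⁻¹ * a) * (b * u) = u⁻¹ * (a * b) * u by group] at this
      | inv a _ ha =>
        by_cases haH : a ∈ H
        · refine ⟨fun _ => ⟨inv_mem (ha.1 haH).1, ?_⟩,
            fun h' => absurd (inv_mem haH) h'⟩
          have := inv_mem (ha.1 haH).2
          rwa [show (u⁻¹ * a * u)⁻¹ = u⁻¹ * a⁻¹ * u by group] at this
        · have : a⁻¹ ∉ H := fun h' => haH (by simpa using inv_mem h')
          refine ⟨fun h' => absurd h' this, fun _ => ⟨?_, ?_⟩⟩
          · have := inv_mem (ha.2 haH).2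
            rwa [show (u⁻¹ * a)⁻¹ = a⁻¹ * u by group] at this
          · have := inv_mem (ha.2 haH).1
            rwa [show (a * u)⁻¹ = u⁻¹ * a⁻¹ by group] at this
    exact ((key h).1 hh).1
end

section
/- The level 2 congruence subgroup PSL(2,ℤ)[2] of PSL(2,ℤ) is a free group of rank 2, generated by the images of the matrices [[1,2],[0,1]] and [[1,0],[2,1]]. -/
open Matrix

/-- The reduction map `SL(2,ℤ) → SL(2,ℤ/2ℤ)`. -/
noncomputable abbrev SL2Red : SpecialLinearGroup (Fin 2) ℤ →* SpecialLinearGroup (Fin 2) (ZMod 2) :=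
  SpecialLinearGroup.map (Int.castRingHom (ZMod 2))

/-- The level 2 principal congruence subgroup `SL(2,ℤ)[2]`. -/
noncomputable abbrev SL2Level2 : Subgroup (SpecialLinearGroup (Fin 2) ℤ) := SL2Red.ker

/-- `PSL(2,ℤ)`, the quotient of `SL(2,ℤ)` by its center `{±E}`. -/
noncomputable abbrev PSL2Z :=
  SpecialLinearGroup (Fin 2) ℤ ⧸ Subgroup.center (SpecialLinearGroup (Fin 2) ℤ)

noncomputable abbrev toPSL2Z : SpecialLinearGroup (Fin 2) ℤ →* PSL2Z :=
  QuotientGroup.mk' (Subgroup.center (SpecialLinearGroup (Fin 2) ℤ))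

/-- The level 2 congruence subgroup of `PSL(2,ℤ)`, the image of `SL(2,ℤ)[2]`. -/
noncomputable abbrev PSL2Level2 : Subgroup PSL2Z := SL2Level2.map toPSL2Z

/-- The matrix `[[1,2],[0,1]]` as an element of `SL(2,ℤ)`. -/
def matA : SpecialLinearGroup (Fin 2) ℤ :=
  ⟨!![1, 2; 0, 1], by norm_num [Matrix.det_fin_two_of]⟩

/-- The matrix `[[1,0],[2,1]]` as an element of `SL(2,ℤ)`. -/
def matB : SpecialLinearGroup (Fin 2) ℤ :=
  ⟨!![1, 0; 2, 1], by norm_num [Matrix.det_fin_two_of]⟩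

/-- translation matrices -/
def matT (k : ℤ) : SpecialLinearGroup (Fin 2) ℤ :=
  ⟨!![1, 2*k; 0, 1], by norm_num [Matrix.det_fin_two_of]⟩

def matT' (k : ℤ) : SpecialLinearGroup (Fin 2) ℤ :=
  ⟨!![1, 0; 2*k, 1], by norm_num [Matrix.det_fin_two_of]⟩

def matNeg : SpecialLinearGroup (Fin 2) ℤ :=
  ⟨!![-1, 0; 0, -1], by norm_num [Matrix.det_fin_two_of]⟩

lemma SL2_ext {M N : SpecialLinearGroup (Fin 2) ℤ}
    (h00 : M.1 0 0 = N.1 0 0) (h01 : M.1 0 1 = N.1 0 1)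
    (h10 : M.1 1 0 = N.1 1 0) (h11 : M.1 1 1 = N.1 1 1) : M = N := by
  apply Subtype.ext
  rw [Matrix.eta_fin_two M.1, Matrix.eta_fin_two N.1, h00, h01, h10, h11]

lemma SL2_mul_apply (M N : SpecialLinearGroup (Fin 2) ℤ) (i j : Fin 2) :
    (M * N).1 i j = M.1 i 0 * N.1 0 j + M.1 i 1 * N.1 1 j := by
  show (M.1 * N.1) i j = _
  rw [Matrix.mul_apply, Fin.sum_univ_two]

lemma mem_level2_iff {M : SpecialLinearGroup (Fin 2) ℤ} :
    M ∈ SL2Level2 ↔ Odd (M.1 0 0) ∧ Even (M.1 0 1) ∧ Even (M.1 1 0) ∧ Odd (M.1 1 1) := by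
  have hcast : ∀ x : ℤ, ((x : ZMod 2) = 0 ↔ Even x) ∧ ((x : ZMod 2) = 1 ↔ Odd x) := by
    intro x
    constructor
    · rw [ZMod.intCast_zmod_eq_zero_iff_dvd, Int.even_iff]
      constructor <;> intro h <;> omega
    · constructor
      · intro h
        have : ((x - 1 : ℤ) : ZMod 2) = 0 := by push_cast; rw [h]; ring
        rw [ZMod.intCast_zmod_eq_zero_iff_dvd] at this
        rw [Int.odd_iff]; omega
      · intro h
        have h2 : (2 : ℤ) ∣ x - 1 := by rw [Int.odd_iff] at h; omega
        have : ((x - 1 : ℤ) : ZMod 2) = 0 := by rwa [ZMod.intCast_zmod_eq_zero_iff_dvd]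
        push_cast at this
        linear_combination this
  rw [MonoidHom.mem_ker]
  constructor
  · intro h
    have he : ∀ i j, ((M.1 i j : ZMod 2)) = (1 : Matrix (Fin 2) (Fin 2) (ZMod 2)) i j := by
      intro i j
      have := congrFun (congrFun (congrArg Subtype.val h) i) j
      simpa using this
    have h00 := he 0 0; have h01 := he 0 1; have h10 := he 1 0; have h11 := he 1 1
    simp [Matrix.one_apply] at h00 h01 h10 h11
    exact ⟨(hcast _).2.mp h00, (hcast _).1.mp h01, (hcast _).1.mp h10, (hcast _).2.mp h11⟩
  · rintro ⟨h00, h01, h10, h11⟩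
    apply Subtype.ext
    ext i j
    fin_cases i <;> fin_cases j <;>
      simp [Matrix.one_apply] <;>
      [exact (hcast _).2.mpr h00; exact (hcast _).1.mpr h01;
       exact (hcast _).1.mpr h10; exact (hcast _).2.mpr h11]

lemma matT_mem_level2 (k : ℤ) : matT k ∈ SL2Level2 := by
  rw [mem_level2_iff]
  refine ⟨⟨0, by simp [matT]⟩, ⟨k, by simp [matT]; ring⟩, ⟨0, by simp [matT]⟩, ⟨0, by simp [matT]⟩⟩

lemma matT'_mem_level2 (k : ℤ) : matT' k ∈ SL2Level2 := by
  rw [mem_level2_iff]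
  refine ⟨⟨0, by simp [matT']⟩, ⟨0, by simp [matT']⟩, ⟨k, by simp [matT']; ring⟩, ⟨0, by simp [matT']⟩⟩

lemma matNeg_mem_level2 : matNeg ∈ SL2Level2 := by
  rw [mem_level2_iff]
  exact ⟨⟨-1, by simp [matNeg]⟩, ⟨0, by simp [matNeg]⟩, ⟨0, by simp [matNeg]⟩, ⟨-1, by simp [matNeg]⟩⟩

/-- The subgroup of `SL(2,ℤ)` generated by `matA`, `matB`, `matNeg`. -/
def Hgrp : Subgroup (SpecialLinearGroup (Fin 2) ℤ) := Subgroup.closure {matA, matB, matNeg}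

lemma matA_mem_H : matA ∈ Hgrp := Subgroup.subset_closure (by simp)
lemma matB_mem_H : matB ∈ Hgrp := Subgroup.subset_closure (by simp)
lemma matNeg_mem_H : matNeg ∈ Hgrp := Subgroup.subset_closure (by simp)

lemma matT_mul_matA (k : ℤ) : matT k * matA = matT (k + 1) := by
  apply SL2_ext <;> simp only [SL2_mul_apply] <;> simp [matT, matA] <;> ring

lemma matT_mul_matA_inv (k : ℤ) : matT k * matA⁻¹ = matT (k - 1) := by
  rw [eq_comm, eq_mul_inv_iff_mul_eq, matT_mul_matA, sub_add_cancel]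

lemma matT'_mul_matB (k : ℤ) : matT' k * matB = matT' (k + 1) := by
  apply SL2_ext <;> simp only [SL2_mul_apply] <;> simp [matT', matB] <;> ring

lemma matT'_mul_matB_inv (k : ℤ) : matT' k * matB⁻¹ = matT' (k - 1) := by
  rw [eq_comm, eq_mul_inv_iff_mul_eq, matT'_mul_matB, sub_add_cancel]

lemma matT_zero : matT 0 = 1 := by
  apply SL2_ext <;> simp [matT, SpecialLinearGroup.coe_one, Matrix.one_apply]

lemma matT'_zero : matT' 0 = 1 := by
  apply SL2_ext <;> simp [matT', SpecialLinearGroup.coe_one, Matrix.one_apply]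

lemma matT_mem_H (k : ℤ) : matT k ∈ Hgrp := by
  induction k using Int.induction_on with
  | zero => rw [matT_zero]; exact one_mem _
  | succ n ih => rw [← matT_mul_matA]; exact mul_mem ih matA_mem_H
  | pred n ih => rw [show (-(n:ℤ) - 1) = (-n) - 1 by ring, ← matT_mul_matA_inv]
                 exact mul_mem ih (inv_mem matA_mem_H)

lemma matT'_mem_H (k : ℤ) : matT' k ∈ Hgrp := by
  induction k using Int.induction_on with
  | zero => rw [matT'_zero]; exact one_mem _
  | succ n ih => rw [← matT'_mul_matB]; exact mul_mem ih matB_mem_H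
  | pred n ih => rw [show (-(n:ℤ) - 1) = (-n) - 1 by ring, ← matT'_mul_matB_inv]
                 exact mul_mem ih (inv_mem matB_mem_H)

/-- balanced remainder -/
lemma exists_balanced (a c : ℤ) (hc : c ≠ 0) :
    ∃ k r : ℤ, a + 2 * c * k = r ∧ r.natAbs ≤ c.natAbs := by
  set m : ℕ := (2 * c).natAbs with hm
  have hm0 : 0 < m := by simp [hm]; omega
  set r : ℤ := Int.bmod a m with hr
  have h1 : -(↑m / 2) ≤ r := Int.le_bmod hm0
  have h2 : r ≤ ((m : ℤ) - 1) / 2 := Int.bmod_le hm0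
  have hdvd : (m : ℤ) ∣ r - a := Int.dvd_bmod_sub_self
  have hdvd2 : (2 * c) ∣ r - a := by
    have : (2 * c) ∣ (m : ℤ) := by
      rcases Int.natAbs_eq (2 * c) with h | h
      · exact ⟨1, by omega⟩
      · exact ⟨-1, by omega⟩
    exact this.trans hdvd
  obtain ⟨q, hq⟩ := hdvd2
  refine ⟨q, r, by omega, ?_⟩
  have hm2 : (m : ℤ) = 2 * c.natAbs := by
    rw [hm]; rcases Int.natAbs_eq c with h | h <;> omega
  omega

lemma matA_mem_level2' : matA ∈ SL2Level2 := by
  have : matA = matT 1 := by apply SL2_ext <;> simp [matA, matT]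
  rw [this]; exact matT_mem_level2 1

lemma matB_mem_level2' : matB ∈ SL2Level2 := by
  have : matB = matT' 1 := by apply SL2_ext <;> simp [matB, matT']
  rw [this]; exact matT'_mem_level2 1

lemma descent : ∀ n : ℕ, ∀ M : SpecialLinearGroup (Fin 2) ℤ, M ∈ SL2Level2 →
    (M.1 0 0).natAbs + (M.1 1 0).natAbs ≤ n → M ∈ Hgrp := by
  intro n
  induction n using Nat.strong_induction_on with
  | _ n ih =>
  intro M hM hle
  obtain ⟨hodd_a, heven_b, heven_c, hodd_d⟩ := mem_level2_iff.mp hM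
  set a := M.1 0 0 with ha'
  set b := M.1 0 1 with hb'
  set c := M.1 1 0 with hc'
  set d := M.1 1 1 with hd'
  have hdet : a * d - b * c = 1 := by
    have := M.2
    rwa [Matrix.det_fin_two] at this
  by_cases hc : c = 0
  · have had : a * d = 1 := by rw [hc] at hdet; linarith
    obtain ⟨k, hk⟩ := heven_b
    rcases Int.mul_eq_one_iff_eq_one_or_neg_one.mp had with ⟨ha1, hd1⟩ | ⟨ha1, hd1⟩
    · have : M = matT k := by
        apply SL2_ext <;> simp [matT] <;> omega
      rw [this]; exact matT_mem_H k
    · have : M = matNeg * matT (-k) := by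
        apply SL2_ext <;> simp only [SL2_mul_apply] <;> simp [matNeg, matT] <;> omega
      rw [this]; exact mul_mem matNeg_mem_H (matT_mem_H _)
  · have haodd : a % 2 = 1 := Int.odd_iff.mp hodd_a
    have hceven : c % 2 = 0 := Int.even_iff.mp heven_c
    rcases lt_or_ge c.natAbs a.natAbs with hlt | hge
    · obtain ⟨k, r, hkr, hrle⟩ := exists_balanced a c hc
      set N := matT k * M with hN
      have hN00 : N.1 0 0 = r := by
        rw [hN, SL2_mul_apply]; simp [matT, ← ha', ← hc']; linarith
      have hN10 : N.1 1 0 = c := by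
        rw [hN, SL2_mul_apply]; simp [matT, ← ha', ← hc']
      have hNmem : N ∈ SL2Level2 := mul_mem (matT_mem_level2 k) hM
      have hNH : N ∈ Hgrp := by
        apply ih (r.natAbs + c.natAbs) (by omega) N hNmem
        rw [hN00, hN10]
      have : M = (matT k)⁻¹ * N := by rw [hN, inv_mul_cancel_left]
      rw [this]; exact mul_mem (inv_mem (matT_mem_H k)) hNH
    · have ha : a ≠ 0 := by intro h; rw [h] at haodd; omega
      have hlt' : a.natAbs < c.natAbs := by
        rcases Nat.lt_or_ge a.natAbs c.natAbs with h | h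
        · exact h
        · exfalso; omega
      obtain ⟨k, r, hkr, hrle⟩ := exists_balanced c a ha
      set N := matT' k * M with hN
      have hN00 : N.1 0 0 = a := by
        rw [hN, SL2_mul_apply]; simp [matT', ← ha', ← hc']
      have hN10 : N.1 1 0 = r := by
        rw [hN, SL2_mul_apply]; simp [matT', ← ha', ← hc']; linarith
      have hNmem : N ∈ SL2Level2 := mul_mem (matT'_mem_level2 k) hM
      have hNH : N ∈ Hgrp := by
        apply ih (a.natAbs + r.natAbs) (by omega) N hNmem
        rw [hN00, hN10]
      have : M = (matT' k)⁻¹ * N := by rw [hN, inv_mul_cancel_left]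
      rw [this]; exact mul_mem (inv_mem (matT'_mem_H k)) hNH

lemma level2_eq_H : SL2Level2 = Hgrp := by
  apply le_antisymm
  · intro M hM; exact descent _ M hM le_rfl
  · rw [Hgrp, Subgroup.closure_le]
    rintro x hx
    rcases hx with rfl | rfl | rfl
    · exact matA_mem_level2'
    · exact matB_mem_level2'
    · exact matNeg_mem_level2

/-! ### Ping-pong -/

def sgn (b : Bool) : ℤ := cond b 1 (-1)

def letter (x : Fin 2 × Bool) : SpecialLinearGroup (Fin 2) ℤ :=
  cond x.2 (![matA, matB] x.1) (![matA, matB] x.1)⁻¹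

def wprod (l : List (Fin 2 × Bool)) : SpecialLinearGroup (Fin 2) ℤ := (l.map letter).prod

/-- action on row vectors -/
def app (M : SpecialLinearGroup (Fin 2) ℤ) (p : ℤ × ℤ) : ℤ × ℤ :=
  (M.1 0 0 * p.1 + M.1 0 1 * p.2, M.1 1 0 * p.1 + M.1 1 1 * p.2)

lemma app_mul (M N : SpecialLinearGroup (Fin 2) ℤ) (p : ℤ × ℤ) :
    app (M * N) p = app M (app N p) := by
  simp only [app, SL2_mul_apply]
  refine Prod.ext ?_ ?_ <;> simp <;> ring

lemma app_one (p : ℤ × ℤ) : app 1 p = p := by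
  simp [app, Matrix.one_apply]


lemma app_matNeg (p : ℤ × ℤ) : app matNeg p = (-p.1, -p.2) := by
  simp [app, matNeg]

lemma matA_inv : matA⁻¹ = matT (-1) := by
  apply inv_eq_of_mul_eq_one_right
  apply SL2_ext <;> simp only [SL2_mul_apply] <;> simp [matA, matT, Matrix.one_apply]

lemma matB_inv : matB⁻¹ = matT' (-1) := by
  apply inv_eq_of_mul_eq_one_right
  apply SL2_ext <;> simp only [SL2_mul_apply] <;> simp [matB, matT', Matrix.one_apply]

lemma matA_eq : matA = matT 1 := by apply SL2_ext <;> simp [matA, matT]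
lemma matB_eq : matB = matT' 1 := by apply SL2_ext <;> simp [matB, matT']

lemma letter_val (i : Fin 2) (b : Bool) :
    letter (i, b) = if i = 0 then matT (sgn b) else matT' (sgn b) := by
  fin_cases i <;> cases b <;>
    simp only [letter, sgn, cond_true, cond_false, Matrix.cons_val_zero, Matrix.cons_val_one,
      Matrix.head_cons, matA_inv, matB_inv, if_true, if_false, Fin.isValue, Fin.mk_one,
      Fin.zero_eta, reduceIte] <;>
    first
      | rfl
      | (rw [matA_eq]; rfl)
      | (rw [matB_eq]; rfl)
      | (rw [matA_inv])
      | (rw [matB_inv])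

lemma app_matT (k : ℤ) (p : ℤ × ℤ) : app (matT k) p = (p.1 + 2 * k * p.2, p.2) := by
  simp [app, matT]

lemma app_matT' (k : ℤ) (p : ℤ × ℤ) : app (matT' k) p = (p.1, p.2 + 2 * k * p.1) := by
  simp [app, matT']; ring

def PInv (x : Fin 2 × Bool) (p : ℤ × ℤ) : Prop :=
  (if x.1 = 0 then p.2.natAbs < p.1.natAbs else p.1.natAbs < p.2.natAbs) ∧
    0 < sgn x.2 * (p.1 * p.2)

def v0 (x : Fin 2 × Bool) : ℤ × ℤ := if x.1 = 0 then (0, sgn x.2) else (sgn x.2, 0)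

lemma core_same (e u v : ℤ) (he : e = 1 ∨ e = -1) (h1 : v.natAbs < u.natAbs)
    (h2 : 0 < e * (u * v)) :
    v.natAbs < (u + 2 * e * v).natAbs ∧ 0 < e * ((u + 2 * e * v) * v) := by
  rcases he with rfl | rfl
  · have h2' : 0 < u * v := by linarith
    rcases mul_pos_iff.mp h2' with ⟨hu, hv⟩ | ⟨hu, hv⟩ <;>
      refine ⟨by omega, by nlinarith⟩
  · have h2' : u * v < 0 := by nlinarith
    rcases mul_neg_iff.mp h2' with ⟨hu, hv⟩ | ⟨hu, hv⟩ <;>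
      refine ⟨by omega, by nlinarith⟩

lemma core_cross (e u v : ℤ) (he : e = 1 ∨ e = -1) (h1 : v.natAbs < u.natAbs) :
    u.natAbs < (v + 2 * e * u).natAbs ∧ 0 < e * (u * (v + 2 * e * u)) := by
  have hsq : v ^ 2 < u ^ 2 := Int.natAbs_lt_iff_sq_lt.mp h1
  rcases he with rfl | rfl
  · exact ⟨by omega, by nlinarith [sq_nonneg (u + v)]⟩
  · exact ⟨by omega, by nlinarith [sq_nonneg (u - v)]⟩

lemma sgn_cases (b : Bool) : sgn b = 1 ∨ sgn b = -1 := by cases b <;> simp [sgn]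

lemma pp_step (x y : Fin 2 × Bool) (p : ℤ × ℤ) (hR : ¬(x.1 = y.1 ∧ x.2 = !y.2))
    (h : PInv y p) : PInv x (app (letter x) p) := by
  obtain ⟨u, v⟩ := p
  obtain ⟨i, b⟩ := x
  obtain ⟨j, c⟩ := y
  obtain ⟨h1, h2⟩ := h
  rw [letter_val]
  fin_cases i <;> fin_cases j <;>
    simp only [Fin.isValue, Fin.zero_eta, Fin.mk_one, if_true, if_false, reduceIte,
      one_ne_zero, Fin.one_eq_zero_iff] at h1 h2 hR ⊢
  · -- A after A : same type, so b = c
    have hbc : b = c := by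
      cases b <;> cases c <;> simp_all
    subst hbc
    rw [app_matT]
    exact ⟨(core_same (sgn b) u v (sgn_cases b) h1 h2).1,
      (core_same (sgn b) u v (sgn_cases b) h1 h2).2⟩
  · -- A after B : cross
    rw [app_matT]
    refine ⟨(core_cross (sgn b) v u (sgn_cases b) h1).1, ?_⟩
    have := (core_cross (sgn b) v u (sgn_cases b) h1).2
    rw [show sgn b * ((u + 2 * sgn b * v) * v) = sgn b * (v * (u + 2 * sgn b * v)) by ring]
    exact this
  · -- B after A : cross
    rw [app_matT']
    exact (core_cross (sgn b) u v (sgn_cases b) h1)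
  · -- B after B : same type
    have hbc : b = c := by
      cases b <;> cases c <;> simp_all
    subst hbc
    rw [app_matT']
    refine ⟨(core_same (sgn b) v u (sgn_cases b) h1 (by rw [show sgn b * (v * u) = sgn b * (u * v) by ring]; exact h2)).1, ?_⟩
    have := (core_same (sgn b) v u (sgn_cases b) h1 (by rw [show sgn b * (v * u) = sgn b * (u * v) by ring]; exact h2)).2
    rw [show sgn b * (u * (v + 2 * sgn b * u)) = sgn b * ((v + 2 * sgn b * u) * u) by ring]
    exact this

lemma pp_base (x : Fin 2 × Bool) : PInv x (app (letter x) (v0 x)) := by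
  obtain ⟨i, b⟩ := x
  rw [letter_val]
  fin_cases i <;> cases b <;>
    simp [v0, sgn, app_matT, app_matT', PInv]

lemma pp_key : ∀ (t : List (Fin 2 × Bool)) (x : Fin 2 × Bool),
    List.Chain' (fun a b => ¬(a.1 = b.1 ∧ a.2 = !b.2)) (x :: t) →
    PInv x (app (wprod (x :: t)) (v0 ((x :: t).getLast (List.cons_ne_nil x t)))) := by
  intro t
  induction t with
  | nil =>
    intro x _
    simpa [wprod] using pp_base x
  | cons y s ih =>
    intro x hchain
    unfold List.Chain' at hchain
    rw [List.isChain_cons_cons] at hchain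
    have hlast : (x :: y :: s).getLast (List.cons_ne_nil x (y :: s))
        = (y :: s).getLast (List.cons_ne_nil y s) := List.getLast_cons _
    rw [hlast]
    have hw : wprod (x :: y :: s) = letter x * wprod (y :: s) := by simp [wprod]
    rw [hw, app_mul]
    exact pp_step x y _ hchain.1 (ih y hchain.2)

lemma chain'_toWord (w : FreeGroup (Fin 2)) :
    w.toWord.Chain' (fun a b => ¬(a.1 = b.1 ∧ a.2 = !b.2)) := by
  unfold List.Chain'
  rw [List.isChain_iff_getElem]
  intro i hi
  by_contra hc
  obtain ⟨h1, h2⟩ := hc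
  set l := w.toWord with hl
  have hi1 : i < l.length := by omega
  have hi2 : i + 1 < l.length := by omega
  have hdec : l = l.take i ++ (l.get ⟨i, hi1⟩) :: (l.get ⟨i + 1, hi2⟩) :: l.drop (i + 2) := by
    conv_lhs => rw [← List.take_append_drop i l]
    congr 1
    rw [List.drop_eq_getElem_cons hi1, List.drop_eq_getElem_cons (by omega : i + 1 < l.length)]
    simp
  have hpair : l.get ⟨i + 1, hi2⟩ = ((l.get ⟨i, hi1⟩).1, !(l.get ⟨i, hi1⟩).2) := by
    apply Prod.ext
    · exact h1.symm
    · simp [hl, h2]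
  rw [hpair] at hdec
  exact FreeGroup.reduce.not (L₂ := l.take i) (L₃ := l.drop (i + 2))
    (x := (l.get ⟨i, hi1⟩).1) (b := (l.get ⟨i, hi1⟩).2)
    (by rw [FreeGroup.reduce_toWord]; exact hdec)

lemma v0_mul_eq_zero (z : Fin 2 × Bool) : (v0 z).1 * (v0 z).2 = 0 := by
  rcases z with ⟨i, b⟩
  unfold v0
  split <;> simp

lemma lift_eq_wprod (w : FreeGroup (Fin 2)) :
    FreeGroup.lift (![matA, matB]) w = wprod w.toWord := by
  conv_lhs => rw [← FreeGroup.mk_toWord (x := w)]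
  rw [FreeGroup.lift_mk]
  rfl

lemma pingpong (w : FreeGroup (Fin 2)) (hw : w ≠ 1) :
    FreeGroup.lift (![matA, matB]) w ≠ 1 ∧ FreeGroup.lift (![matA, matB]) w ≠ matNeg := by
  have hnil : w.toWord ≠ [] := fun h => hw (FreeGroup.toWord_eq_nil_iff.mp h)
  obtain ⟨x, t, hxt⟩ : ∃ x t, w.toWord = x :: t := by
    cases h : w.toWord with
    | nil => exact absurd h hnil
    | cons a l => exact ⟨a, l, rfl⟩
  have hchain := chain'_toWord w
  rw [hxt] at hchain
  have hinv := pp_key t x hchain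
  have hl := lift_eq_wprod w
  rw [hxt] at hl
  set z := (x :: t).getLast (List.cons_ne_nil x t) with hz
  constructor
  · intro hEq
    rw [hEq] at hl
    rw [← hl, app_one] at hinv
    have := hinv.2
    rw [v0_mul_eq_zero] at this
    simp at this
  · intro hEq
    rw [hEq] at hl
    rw [← hl, app_matNeg] at hinv
    have := hinv.2
    have h0 : -(v0 z).1 * -(v0 z).2 = 0 := by
      have := v0_mul_eq_zero z; nlinarith [v0_mul_eq_zero z]
    rw [h0] at this
    simp at this

/-! ### The center -/

lemma matNeg_mem_center : matNeg ∈ Subgroup.center (SpecialLinearGroup (Fin 2) ℤ) := by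
  rw [Matrix.SpecialLinearGroup.mem_center_iff]
  refine ⟨-1, by norm_num, ?_⟩
  ext i j
  fin_cases i <;> fin_cases j <;> simp [matNeg, Matrix.scalar_apply, Matrix.diagonal]

lemma center_cases {M : SpecialLinearGroup (Fin 2) ℤ}
    (h : M ∈ Subgroup.center (SpecialLinearGroup (Fin 2) ℤ)) : M = 1 ∨ M = matNeg := by
  obtain ⟨r, hr2, hrs⟩ := Matrix.SpecialLinearGroup.mem_center_iff.mp h
  have hr2' : r * r = 1 := by
    have : r ^ (Fintype.card (Fin 2)) = r * r := by
      rw [Fintype.card_fin]; ring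
    rw [← this]; exact hr2
  rcases mul_self_eq_one_iff.mp hr2' with rfl | rfl
  · left
    apply Subtype.ext
    rw [← hrs]
    ext i j
    fin_cases i <;> fin_cases j <;>
      simp [Matrix.scalar_apply, Matrix.diagonal, Matrix.one_apply]
  · right
    apply Subtype.ext
    rw [← hrs]
    ext i j
    fin_cases i <;> fin_cases j <;>
      simp [Matrix.scalar_apply, Matrix.diagonal, matNeg]

lemma toPSL2Z_matNeg : toPSL2Z matNeg = 1 := by
  rw [← MonoidHom.mem_ker, QuotientGroup.ker_mk']
  exact matNeg_mem_center

/-- `PSL(2,ℤ)[2]` is a free group of rank 2, generated by the images of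
`[[1,2],[0,1]]` and `[[1,0],[2,1]]`. -/
theorem PSL2Level2_free_of_rank_two :
    PSL2Level2 = Subgroup.closure {toPSL2Z matA, toPSL2Z matB} ∧
      Nonempty (PSL2Level2 ≃* FreeGroup (Fin 2)) := by
  have hmap : PSL2Level2 = Subgroup.closure {toPSL2Z matA, toPSL2Z matB} := by
    show Subgroup.map toPSL2Z SL2Level2 = _
    rw [level2_eq_H, Hgrp, MonoidHom.map_closure]
    apply le_antisymm
    · rw [Subgroup.closure_le]
      rintro x ⟨m, hm, rfl⟩
      rcases hm with rfl | rfl | rfl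
      · exact Subgroup.subset_closure (by simp)
      · exact Subgroup.subset_closure (by simp)
      · rw [toPSL2Z_matNeg]; exact one_mem _
    · rw [Subgroup.closure_le]
      rintro x (rfl | rfl)
      · exact Subgroup.subset_closure ⟨matA, by simp, rfl⟩
      · exact Subgroup.subset_closure ⟨matB, by simp, rfl⟩
  refine ⟨hmap, ?_⟩
  set f : FreeGroup (Fin 2) →* PSL2Z := FreeGroup.lift (![toPSL2Z matA, toPSL2Z matB]) with hf
  have hcomp : toPSL2Z.comp (FreeGroup.lift (![matA, matB])) = f := by
    apply FreeGroup.ext_hom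
    intro i
    fin_cases i <;> simp [hf]
  have hinj : Function.Injective f := by
    rw [injective_iff_map_eq_one]
    intro w hw1
    by_contra hw
    have h1 : toPSL2Z (FreeGroup.lift (![matA, matB]) w) = 1 := by
      rw [← MonoidHom.comp_apply, hcomp]; exact hw1
    rw [← MonoidHom.mem_ker, QuotientGroup.ker_mk'] at h1
    rcases center_cases h1 with h | h
    · exact (pingpong w hw).1 h
    · exact (pingpong w hw).2 h
  have hrange : f.range = Subgroup.closure {toPSL2Z matA, toPSL2Z matB} := by
    rw [hf, FreeGroup.range_lift_eq_closure]
    congr 1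
    ext z
    simp [Fin.exists_fin_two, eq_comm]
    tauto
  have e2 : PSL2Level2 = f.range := by rw [hrange, hmap]
  exact ⟨(MulEquiv.subgroupCongr e2).trans (MonoidHom.ofInjective hinj).symm⟩
end
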